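/- Let f = Σ_{β ∈ I(n,d)} f_β x^β be a homogeneous polynomial of degree d ≥ 1 in n variables with real coefficients. Then max_{β ∈ I(n,d)} f_β β!/d! − min_{β ∈ I(n,d)} f_β β!/d! ≤ C(2d−1, d) · d^d · (f̄ − f̲), where β! = β_1!···β_n! and C(2d−1,d) is the binomial coefficient. -/

import Mathlib

open Finset

noncomputable section

/-- Falling factorial `t^(d) = t (t-1) ⋯ (t-d+1)`. -/
def fall (t : ℝ) : ℕ → ℝ
  | 0 => 1
  | d + 1 => fall t d * (t - (d : ℝ))

/-- The regular grid `Δ(n,r) = {x ∈ Δ_n : r·x ∈ ℕ^n}`. -/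
def regularGrid (n r : ℕ) : Set (Fin n → ℝ) :=
  {x ∈ stdSimplex ℝ (Fin n) | ∀ i, ∃ k : ℕ, (r : ℝ) * x i = (k : ℝ)}

/-- `f_{Δ(n,r)}`, the minimum of `f` over the regular grid. -/
def minGrid (n r : ℕ) (f : (Fin n → ℝ) → ℝ) : ℝ :=
  sInf (f '' regularGrid n r)

/-- `f̲`, the minimum of `f` over the standard simplex. -/
def minSimplex (n : ℕ) (f : (Fin n → ℝ) → ℝ) : ℝ :=
  sInf (f '' stdSimplex ℝ (Fin n))

/-- `f̄`, the maximum of `f` over the standard simplex. -/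
def maxSimplex (n : ℕ) (f : (Fin n → ℝ) → ℝ) : ℝ :=
  sSup (f '' stdSimplex ℝ (Fin n))

/-- The homogeneous polynomial of degree `d` with coefficients `c`,
`f(x) = Σ_{β ∈ I(n,d)} c_β x^β`. -/
def homPoly (n d : ℕ) (c : (Fin n → ℕ) → ℝ) (x : Fin n → ℝ) : ℝ :=
  ∑ β ∈ Finset.Nat.antidiagonalTuple n d, c β * ∏ i, x i ^ β i

/-- The Pólya-type lower bound
`f_min^{(r-d)} = min_{α ∈ I(n,r)} Σ_{β ∈ I(n,d)} c_β α^{(β)} / r^{(d)}`. -/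
def polyaBound (n d r : ℕ) (c : (Fin n → ℕ) → ℝ) : ℝ :=
  sInf ((fun α : Fin n → ℕ =>
      (∑ β ∈ Finset.Nat.antidiagonalTuple n d,
        c β * ∏ i, fall ((α i : ℕ) : ℝ) (β i)) / fall (r : ℝ) d) ''
    {α : Fin n → ℕ | ∑ i, α i = r})

/-- The set of Bernstein coefficients `{c_β β!/d! : β ∈ I(n,d)}` of the homogeneous
polynomial with coefficients `c`. -/
def bernsteinCoeffs (n d : ℕ) (c : (Fin n → ℕ) → ℝ) : Set ℝ :=
  (fun β : Fin n → ℕ => c β * (∏ i, ((β i).factorial : ℝ)) / (d.factorial : ℝ)) ''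
    {β : Fin n → ℕ | ∑ i, β i = d}

namespace St12


/-- `Fp b g = ∑_{a=0}^{b} (-1)^a C(b,a) a^g`. -/
def Fp (b g : ℕ) : ℝ :=
  ∑ a ∈ Finset.range (b + 1), (-1 : ℝ) ^ a * (b.choose a : ℝ) * (a : ℝ) ^ g

lemma Fp_rec (b g : ℕ) :
    Fp (b + 1) g = -∑ j ∈ Finset.range g, (g.choose j : ℝ) * Fp b j := by
  have h1 : Fp (b + 1) g
      = (∑ a ∈ Finset.range (b + 1),
          (-1 : ℝ) ^ (a + 1) * ((b + 1).choose (a + 1) : ℝ) * (((a + 1 : ℕ)) : ℝ) ^ g)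
        + (-1 : ℝ) ^ 0 * ((b + 1).choose 0 : ℝ) * (((0 : ℕ)) : ℝ) ^ g :=
    Finset.sum_range_succ' _ _
  have h2 : ∀ a ∈ Finset.range (b + 1),
      (-1 : ℝ) ^ (a + 1) * ((b + 1).choose (a + 1) : ℝ) * (((a + 1 : ℕ)) : ℝ) ^ g
      = -((-1 : ℝ) ^ a * (b.choose a : ℝ) * ((a : ℝ) + 1) ^ g)
        + (-1 : ℝ) ^ (a + 1) * (b.choose (a + 1) : ℝ) * ((a : ℝ) + 1) ^ g := by
    intro a _
    rw [Nat.choose_succ_succ]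
    push_cast
    ring
  have hS2 : (∑ a ∈ Finset.range (b + 1),
      (-1 : ℝ) ^ (a + 1) * (b.choose (a + 1) : ℝ) * ((a : ℝ) + 1) ^ g)
      = Fp b g - (0 : ℝ) ^ g := by
    have hs := Finset.sum_range_succ' (fun a => (-1 : ℝ) ^ a * (b.choose a : ℝ) * (a : ℝ) ^ g) (b + 1)
    have htop : (∑ a ∈ Finset.range (b + 2), (-1 : ℝ) ^ a * (b.choose a : ℝ) * (a : ℝ) ^ g)
        = Fp b g := by
      rw [Finset.sum_range_succ, Fp, Nat.choose_succ_self]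
      simp
    rw [htop] at hs
    rw [show (∑ a ∈ Finset.range (b + 1),
        (-1 : ℝ) ^ (a + 1) * (b.choose (a + 1) : ℝ) * ((a : ℝ) + 1) ^ g)
        = ∑ a ∈ Finset.range (b + 1),
          (-1 : ℝ) ^ (a + 1) * (b.choose (a + 1) : ℝ) * (((a + 1 : ℕ)) : ℝ) ^ g from
      Finset.sum_congr rfl fun a _ => by push_cast; ring]
    rw [hs]
    simp
  have hS1 : (∑ a ∈ Finset.range (b + 1),
      (-1 : ℝ) ^ a * (b.choose a : ℝ) * ((a : ℝ) + 1) ^ g)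
      = (∑ j ∈ Finset.range g, (g.choose j : ℝ) * Fp b j) + Fp b g := by
    have expand : ∀ a : ℕ, ((a : ℝ) + 1) ^ g
        = ∑ j ∈ Finset.range (g + 1), (a : ℝ) ^ j * (g.choose j : ℝ) := by
      intro a
      have := add_pow (a : ℝ) 1 g
      simpa using this
    calc (∑ a ∈ Finset.range (b + 1), (-1 : ℝ) ^ a * (b.choose a : ℝ) * ((a : ℝ) + 1) ^ g)
        = ∑ a ∈ Finset.range (b + 1), ∑ j ∈ Finset.range (g + 1),
            (g.choose j : ℝ) * ((-1 : ℝ) ^ a * (b.choose a : ℝ) * (a : ℝ) ^ j) := by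
          refine Finset.sum_congr rfl fun a _ => ?_
          rw [expand a, Finset.mul_sum]
          refine Finset.sum_congr rfl fun j _ => ?_
          ring
      _ = ∑ j ∈ Finset.range (g + 1), (g.choose j : ℝ) * Fp b j := by
          rw [Finset.sum_comm]
          refine Finset.sum_congr rfl fun j _ => ?_
          rw [Fp, Finset.mul_sum]
      _ = (∑ j ∈ Finset.range g, (g.choose j : ℝ) * Fp b j) + Fp b g := by
          rw [Finset.sum_range_succ, Nat.choose_self]
          simp
  rw [h1, Finset.sum_congr rfl h2, Finset.sum_add_distrib, hS2,
    show (∑ a ∈ Finset.range (b + 1), -((-1 : ℝ) ^ a * (b.choose a : ℝ) * ((a : ℝ) + 1) ^ g))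
      = -∑ a ∈ Finset.range (b + 1), ((-1 : ℝ) ^ a * (b.choose a : ℝ) * ((a : ℝ) + 1) ^ g) from
      Finset.sum_neg_distrib _, hS1]
  simp
  ring

lemma Fp_eq_zero : ∀ b g : ℕ, g < b → Fp b g = 0 := by
  intro b
  induction b with
  | zero => intro g hg; omega
  | succ b ih =>
    intro g hg
    rw [Fp_rec]
    rw [Finset.sum_eq_zero fun j hj => by
      rw [ih j (by have := Finset.mem_range.1 hj; omega)]; ring]
    ring

lemma Fp_self : ∀ b : ℕ, Fp b b = (-1 : ℝ) ^ b * (b.factorial : ℝ) := by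
  intro b
  induction b with
  | zero => simp [Fp]
  | succ b ih =>
    rw [Fp_rec]
    rw [Finset.sum_eq_single_of_mem b (Finset.mem_range.2 (by omega))
      (fun j hj hne => by
        rw [Fp_eq_zero b j (by have := Finset.mem_range.1 hj; omega)]; ring)]
    rw [ih, Nat.choose_succ_self_right, Nat.factorial_succ]
    push_cast
    ring

lemma neg_one_pow_sub {a b : ℕ} (h : a ≤ b) :
    (-1 : ℝ) ^ (b - a) = (-1 : ℝ) ^ b * (-1 : ℝ) ^ a := by
  have h2 : (-1 : ℝ) ^ (b - a) * ((-1 : ℝ) ^ a * (-1 : ℝ) ^ a) = (-1 : ℝ) ^ b * (-1 : ℝ) ^ a := by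
    rw [← mul_assoc, ← pow_add, Nat.sub_add_cancel h]
  have h3 : (-1 : ℝ) ^ a * (-1 : ℝ) ^ a = 1 := by
    rw [← pow_add]
    exact Even.neg_one_pow (Even.add_self a)
  rw [h3, mul_one] at h2
  exact h2

lemma inner_sum (b g : ℕ) :
    (∑ a ∈ Finset.range (b + 1), (-1 : ℝ) ^ (b - a) * (b.choose a : ℝ) * (a : ℝ) ^ g)
      = (-1 : ℝ) ^ b * Fp b g := by
  rw [Fp, Finset.mul_sum]
  refine Finset.sum_congr rfl fun a ha => ?_
  rw [neg_one_pow_sub (by have := Finset.mem_range.1 ha; omega)]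
  ring

/-- The orthogonality kernel. -/
lemma kernel {n : ℕ} (β γ : Fin n → ℕ) (hsum : ∑ i, β i = ∑ i, γ i) :
    (∑ α ∈ Fintype.piFinset (fun i => Finset.range (β i + 1)),
        ∏ i, ((-1 : ℝ) ^ (β i - α i) * ((β i).choose (α i) : ℝ) * (α i : ℝ) ^ γ i))
      = if γ = β then ∏ i, ((β i).factorial : ℝ) else 0 := by
  have hpu := Finset.prod_univ_sum (fun i : Fin n => Finset.range (β i + 1))
    (fun i a => (-1 : ℝ) ^ (β i - a) * ((β i).choose a : ℝ) * (a : ℝ) ^ γ i)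
  rw [← hpu]
  have hfac : ∀ i : Fin n,
      (∑ a ∈ Finset.range (β i + 1),
        (-1 : ℝ) ^ (β i - a) * ((β i).choose a : ℝ) * (a : ℝ) ^ γ i)
      = (-1 : ℝ) ^ (β i) * Fp (β i) (γ i) := fun i => inner_sum (β i) (γ i)
  rw [Finset.prod_congr rfl fun i _ => hfac i]
  by_cases hγβ : γ = β
  · subst hγβ
    rw [if_pos rfl]
    have : ∀ i : Fin n, (-1 : ℝ) ^ (γ i) * Fp (γ i) (γ i) = ((γ i).factorial : ℝ) := by
      intro i
      rw [Fp_self]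
      rw [← mul_assoc, ← pow_add]
      rw [Even.neg_one_pow (Even.add_self _), one_mul]
    exact Finset.prod_congr rfl fun i _ => this i
  · rw [if_neg hγβ]
    have hex : ∃ i, γ i < β i := by
      by_contra hc
      push_neg at hc
      apply hγβ
      funext i
      have := (Finset.sum_eq_sum_iff_of_le (fun i _ => hc i)).1 hsum i (Finset.mem_univ i)
      omega
    obtain ⟨i0, hi0⟩ := hex
    exact Finset.prod_eq_zero (Finset.mem_univ i0)
      (by rw [Fp_eq_zero _ _ hi0]; ring)

/-- Expansion lemma: alternating sums against any polynomial written over exponent set `S`. -/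
lemma sum_w_mul {n d : ℕ} (β : Fin n → ℕ) (hβ : ∑ i, β i = d)
    (S : Finset (Fin n → ℕ)) (hS : ∀ γ ∈ S, ∑ i, γ i = d) (hβS : β ∈ S)
    (e : (Fin n → ℕ) → ℝ) :
    (∑ α ∈ Fintype.piFinset (fun i => Finset.range (β i + 1)),
        (∏ i, ((-1 : ℝ) ^ (β i - α i) * ((β i).choose (α i) : ℝ)))
          * (∑ γ ∈ S, e γ * ∏ i, (α i : ℝ) ^ γ i))
      = e β * ∏ i, ((β i).factorial : ℝ) := by
  have hterm : ∀ α : Fin n → ℕ,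
      (∏ i, ((-1 : ℝ) ^ (β i - α i) * ((β i).choose (α i) : ℝ)))
          * (∑ γ ∈ S, e γ * ∏ i, (α i : ℝ) ^ γ i)
      = ∑ γ ∈ S, e γ *
          ∏ i, ((-1 : ℝ) ^ (β i - α i) * ((β i).choose (α i) : ℝ) * (α i : ℝ) ^ γ i) := by
    intro α
    rw [Finset.mul_sum]
    refine Finset.sum_congr rfl fun γ _ => ?_
    simp only [Finset.prod_mul_distrib]
    ring
  rw [Finset.sum_congr rfl fun α _ => hterm α, Finset.sum_comm]
  rw [Finset.sum_congr rfl fun γ hγ => by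
    rw [← Finset.mul_sum, kernel β γ (by rw [hβ, hS γ hγ])]]
  rw [Finset.sum_eq_single_of_mem β hβS fun γ _ hne => by rw [if_neg hne, mul_zero]]
  rw [if_pos rfl]


/-- the box `{α : α ≤ β}` -/
def box {n : ℕ} (β : Fin n → ℕ) : Finset (Fin n → ℕ) :=
  Fintype.piFinset (fun i => Finset.range (β i + 1))

/-- the signed weight `(-1)^{|β - α|} C(β, α)` -/
def wgt {n : ℕ} (β α : Fin n → ℕ) : ℝ :=
  ∏ i, ((-1 : ℝ) ^ (β i - α i) * ((β i).choose (α i) : ℝ))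

/-- the unsigned weight `C(β, α)` -/
def pch {n : ℕ} (β α : Fin n → ℕ) : ℝ :=
  ∏ i, (((β i).choose (α i) : ℕ) : ℝ)

variable {n d : ℕ}

lemma sum_w_homPoly (c : (Fin n → ℕ) → ℝ) (β : Fin n → ℕ) (hβ : ∑ i, β i = d) :
    (∑ α ∈ Fintype.piFinset (fun i => Finset.range (β i + 1)),
        (∏ i, ((-1 : ℝ) ^ (β i - α i) * ((β i).choose (α i) : ℝ)))
          * homPoly n d c (fun i => (α i : ℝ)))
      = c β * ∏ i, ((β i).factorial : ℝ) :=
  sum_w_mul β hβ _ (fun γ hγ => Finset.Nat.mem_antidiagonalTuple.1 hγ)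
    (Finset.Nat.mem_antidiagonalTuple.2 hβ) c

lemma sum_w_pow (β : Fin n → ℕ) (hβ : ∑ i, β i = d) :
    (∑ α ∈ Fintype.piFinset (fun i => Finset.range (β i + 1)),
        (∏ i, ((-1 : ℝ) ^ (β i - α i) * ((β i).choose (α i) : ℝ)))
          * (∑ i, (α i : ℝ)) ^ d)
      = (d.factorial : ℝ) := by
  have hrw : ∀ α : Fin n → ℕ, ((∑ i, (α i : ℝ)) ^ d)
      = ∑ k ∈ Finset.piAntidiag (univ : Finset (Fin n)) d,
          (Nat.multinomial univ k : ℝ) * ∏ i, (α i : ℝ) ^ k i := fun α =>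
    Finset.sum_pow_eq_sum_piAntidiag univ _ d
  rw [Finset.sum_congr rfl fun α _ => by rw [hrw α]]
  rw [sum_w_mul β hβ _ (fun γ hγ => (Finset.mem_piAntidiag.1 hγ).1)
    (Finset.mem_piAntidiag.2 ⟨hβ, fun i _ => Finset.mem_univ i⟩)
    (fun k => (Nat.multinomial univ k : ℝ))]
  have := Nat.multinomial_spec (univ : Finset (Fin n)) β
  rw [hβ] at this
  rw [mul_comm]
  exact_mod_cast congrArg (Nat.cast : ℕ → ℝ) this

lemma sum_prodChoose (β : Fin n → ℕ) (hβ : ∑ i, β i = d) :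
    (∑ α ∈ Fintype.piFinset (fun i => Finset.range (β i + 1)),
        ∏ i, (((β i).choose (α i) : ℕ) : ℝ))
      = 2 ^ d := by
  have hpu := Finset.prod_univ_sum (fun i : Fin n => Finset.range (β i + 1))
    (fun i a => (((β i).choose a : ℕ) : ℝ))
  rw [← hpu]
  have h1 : ∀ i : Fin n, (∑ a ∈ Finset.range (β i + 1), (((β i).choose a : ℕ) : ℝ))
      = (2 : ℝ) ^ β i := by
    intro i
    rw [← Nat.cast_sum, Nat.sum_range_choose]
    push_cast
    ring
  rw [Finset.prod_congr rfl fun i _ => h1 i, Finset.prod_pow_eq_pow_sum, hβ]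

lemma sum_w (β : Fin n → ℕ) (hβ : ∑ i, β i = d) (hd : 1 ≤ d) :
    (∑ α ∈ Fintype.piFinset (fun i => Finset.range (β i + 1)),
        ∏ i, ((-1 : ℝ) ^ (β i - α i) * ((β i).choose (α i) : ℝ)))
      = 0 := by
  have hpu := Finset.prod_univ_sum (fun i : Fin n => Finset.range (β i + 1))
    (fun i a => ((-1 : ℝ) ^ (β i - a) * ((β i).choose a : ℝ)))
  rw [← hpu]
  have hex : ∃ i0, β i0 ≠ 0 := by
    by_contra h
    push_neg at h
    rw [Finset.sum_eq_zero fun i _ => h i] at hβ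
    omega
  obtain ⟨i0, h0⟩ := hex
  refine Finset.prod_eq_zero (Finset.mem_univ i0) ?_
  have : (∑ a ∈ Finset.range (β i0 + 1), ((-1 : ℝ) ^ (β i0 - a) * ((β i0).choose a : ℝ)))
      = ∑ a ∈ Finset.range (β i0 + 1),
          ((-1 : ℝ) ^ (β i0 - a) * ((β i0).choose a : ℝ) * (a : ℝ) ^ 0) := by
    refine Finset.sum_congr rfl fun a _ => ?_
    rw [pow_zero, mul_one]
  rw [this, inner_sum (β i0) 0, Fp_eq_zero (β i0) 0 (Nat.pos_of_ne_zero h0)]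
  ring

lemma w_pm (β α : Fin n → ℕ) :
    (∏ i, ((-1 : ℝ) ^ (β i - α i) * ((β i).choose (α i) : ℝ)))
        = (∏ i, (((β i).choose (α i) : ℕ) : ℝ))
    ∨ (∏ i, ((-1 : ℝ) ^ (β i - α i) * ((β i).choose (α i) : ℝ)))
        = -(∏ i, (((β i).choose (α i) : ℕ) : ℝ)) := by
  rw [Finset.prod_mul_distrib]
  have hp : (∏ i : Fin n, (-1 : ℝ) ^ (β i - α i))
      = (-1 : ℝ) ^ (∑ i, (β i - α i)) := Finset.prod_pow_eq_pow_sum _ _ _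
  rcases Nat.even_or_odd (∑ i, (β i - α i)) with he | ho
  · left; rw [hp, he.neg_one_pow, one_mul]
  · right; rw [hp, ho.neg_one_pow]; ring

lemma mem_piFinset_zero (β : Fin n → ℕ) :
    (fun _ => 0 : Fin n → ℕ) ∈ Fintype.piFinset (fun i => Finset.range (β i + 1)) :=
  Fintype.mem_piFinset.2 fun i => Finset.mem_range.2 (Nat.succ_pos _)

lemma w_zero (β : Fin n → ℕ) (hβ : ∑ i, β i = d) :
    (∏ i, ((-1 : ℝ) ^ (β i - (fun _ => 0 : Fin n → ℕ) i)
      * ((β i).choose ((fun _ => 0 : Fin n → ℕ) i) : ℝ))) = (-1 : ℝ) ^ d := by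
  have : ∀ i : Fin n, ((-1 : ℝ) ^ (β i - (fun _ => 0 : Fin n → ℕ) i)
      * ((β i).choose ((fun _ => 0 : Fin n → ℕ) i) : ℝ)) = (-1 : ℝ) ^ β i := by
    intro i
    simp [Nat.choose_zero_right]
  rw [Finset.prod_congr rfl fun i _ => this i, Finset.prod_pow_eq_pow_sum, hβ]

lemma prodChoose_zero (β : Fin n → ℕ) :
    (∏ i, (((β i).choose ((fun _ => 0 : Fin n → ℕ) i) : ℕ) : ℝ)) = 1 := by
  simp [Nat.choose_zero_right]

lemma homPoly_smul (c : (Fin n → ℕ) → ℝ) (t : ℝ) (x : Fin n → ℝ) :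
    homPoly n d c (fun i => t * x i) = t ^ d * homPoly n d c x := by
  rw [homPoly, homPoly, Finset.mul_sum]
  refine Finset.sum_congr rfl fun γ hγ => ?_
  have hγd : ∑ i, γ i = d := Finset.Nat.mem_antidiagonalTuple.1 hγ
  have h1 : (∏ i, (t * x i) ^ γ i) = (∏ i, t ^ γ i) * ∏ i, x i ^ γ i := by
    rw [← Finset.prod_mul_distrib]
    exact Finset.prod_congr rfl fun i _ => mul_pow _ _ _
  rw [h1, Finset.prod_pow_eq_pow_sum, hγd]
  ring

lemma homPoly_zero (hd : 1 ≤ d) (c : (Fin n → ℕ) → ℝ) :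
    homPoly n d c (fun _ => (0 : ℝ)) = 0 := by
  rw [homPoly]
  refine Finset.sum_eq_zero fun γ hγ => ?_
  have hγd : ∑ i, γ i = d := Finset.Nat.mem_antidiagonalTuple.1 hγ
  have hex : ∃ i0, γ i0 ≠ 0 := by
    by_contra h
    push_neg at h
    rw [Finset.sum_eq_zero fun i _ => h i] at hγd
    omega
  obtain ⟨i0, h0⟩ := hex
  rw [Finset.prod_eq_zero (Finset.mem_univ i0) (zero_pow h0), mul_zero]

lemma homPoly_continuous (c : (Fin n → ℕ) → ℝ) : Continuous (homPoly n d c) := by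
  unfold homPoly
  exact continuous_finset_sum _ fun γ _ =>
    continuous_const.mul (continuous_finset_prod _ fun i _ => (continuous_apply i).pow _)

lemma two_pow_le : ∀ d : ℕ, 1 ≤ d → 2 ^ d ≤ (2 * d - 1).descFactorial d + 1 := by
  intro d
  induction d with
  | zero => omega
  | succ d ih =>
    intro _
    by_cases hd : d = 0
    · subst hd; decide
    · have hd1 : 1 ≤ d := Nat.one_le_iff_ne_zero.2 hd
      have h1 := ih hd1
      have h2 : 2 * (d + 1) - 1 = (2 * d) + 1 := by omega
      rw [h2]
      rw [Nat.succ_descFactorial_succ (2 * d) d]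
      have h4 : (2 * d - 1).descFactorial d ≤ (2 * d).descFactorial d :=
        Nat.descFactorial_le d (by omega)
      have h5 : (2 * d - 1).descFactorial d ≠ 0 := by
        intro hc
        have := Nat.descFactorial_eq_zero_iff_lt.1 hc
        omega
      have h6 : 1 ≤ (2 * d - 1).descFactorial d := Nat.one_le_iff_ne_zero.2 h5
      have h7 : 3 ≤ 2 * d + 1 := by omega
      calc 2 ^ (d + 1) = 2 * 2 ^ d := by ring
        _ ≤ 2 * ((2 * d - 1).descFactorial d + 1) := by omega
        _ ≤ (2 * d + 1) * (2 * d).descFactorial d + 1 := by nlinarith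
        _ = (2 * d + 1) * (2 * d).descFactorial d + 1 := rfl

lemma two_pow_le_real (hd : 1 ≤ d) :
    (2 : ℝ) ^ d - 1 ≤ (d.factorial : ℝ) * ((2 * d - 1).choose d : ℝ) := by
  have h1 := two_pow_le d hd
  rw [Nat.descFactorial_eq_factorial_mul_choose] at h1
  have h2 : ((2 : ℕ) ^ d : ℝ) ≤ ((d.factorial * (2 * d - 1).choose d + 1 : ℕ) : ℝ) := by
    exact_mod_cast h1
  push_cast at h2
  linarith


lemma box_w_homPoly (c : (Fin n → ℕ) → ℝ) (β : Fin n → ℕ) (hβ : ∑ i, β i = d) :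
    (∑ α ∈ box β, wgt β α * homPoly n d c (fun i => (α i : ℝ)))
      = c β * ∏ i, ((β i).factorial : ℝ) :=
  sum_w_homPoly c β hβ

lemma box_w_pow (β : Fin n → ℕ) (hβ : ∑ i, β i = d) :
    (∑ α ∈ box β, wgt β α * (∑ i, (α i : ℝ)) ^ d) = (d.factorial : ℝ) :=
  sum_w_pow β hβ

lemma box_pch (β : Fin n → ℕ) (hβ : ∑ i, β i = d) :
    (∑ α ∈ box β, pch β α) = 2 ^ d :=
  sum_prodChoose β hβ

lemma box_w (β : Fin n → ℕ) (hβ : ∑ i, β i = d) (hd : 1 ≤ d) :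
    (∑ α ∈ box β, wgt β α) = 0 :=
  sum_w β hβ hd

lemma wgt_pm (β α : Fin n → ℕ) : wgt β α = pch β α ∨ wgt β α = -pch β α :=
  w_pm β α

lemma zero_mem_box (β : Fin n → ℕ) : (fun _ => 0 : Fin n → ℕ) ∈ box β :=
  mem_piFinset_zero β

lemma wgt_zero (β : Fin n → ℕ) (hβ : ∑ i, β i = d) :
    wgt β (fun _ => 0) = (-1 : ℝ) ^ d :=
  w_zero β hβ

lemma pch_zero (β : Fin n → ℕ) : pch β (fun _ => 0 : Fin n → ℕ) = 1 :=
  prodChoose_zero β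

lemma pch_nonneg (β α : Fin n → ℕ) : 0 ≤ pch β α :=
  Finset.prod_nonneg fun i _ => Nat.cast_nonneg _

lemma sum_ite_zero' {ι : Type*} [DecidableEq ι] {s : Finset ι} {z : ι} (hz : z ∈ s)
    (v : ι → ℝ) :
    (∑ α ∈ s, (if α = z then 0 else v α)) = (∑ α ∈ s, v α) - v z := by
  rw [← Finset.add_sum_erase _ v hz, ← Finset.add_sum_erase _ _ hz]
  rw [if_pos rfl, zero_add,
    Finset.sum_congr rfl fun x hx => if_neg (Finset.mem_erase.1 hx).1]
  ring

/-- The core estimate. For `s = 1` this bounds the Bernstein coefficient from above,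
for `s = -1` from below. -/
lemma core (hd : 1 ≤ d) (c : (Fin n → ℕ) → ℝ) {m M : ℝ}
    (hmf : ∀ x ∈ stdSimplex ℝ (Fin n), m ≤ homPoly n d c x)
    (hfM : ∀ x ∈ stdSimplex ℝ (Fin n), homPoly n d c x ≤ M)
    (hmM : m ≤ M)
    (β : Fin n → ℕ) (hβ : ∑ i, β i = d) (s : ℝ) (hs : s = 1 ∨ s = -1) :
    s * (c β * (∏ i, ((β i).factorial : ℝ)) - (d.factorial : ℝ) * m)
      ≤ (d : ℝ) ^ d * (M - m) / 2 * (2 ^ d - 1 - s * (-1 : ℝ) ^ d) := by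
  classical
  set D : ℝ := (d : ℝ) ^ d * (M - m) with hD
  have hDnn : 0 ≤ D := mul_nonneg (pow_nonneg (Nat.cast_nonneg d) d) (by linarith)
  set g : (Fin n → ℕ) → ℝ :=
    fun α => homPoly n d c (fun i => (α i : ℝ)) - m * (∑ i, (α i : ℝ)) ^ d with hgdef
  -- the identity
  have hid : (∑ α ∈ box β, wgt β α * g α)
      = c β * (∏ i, ((β i).factorial : ℝ)) - (d.factorial : ℝ) * m := by
    have h3 : ∀ α : Fin n → ℕ, wgt β α * g α
        = wgt β α * homPoly n d c (fun i => (α i : ℝ))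
          - m * (wgt β α * (∑ i, (α i : ℝ)) ^ d) := fun α => by rw [hgdef]; ring
    rw [Finset.sum_congr rfl fun α _ => h3 α, Finset.sum_sub_distrib, ← Finset.mul_sum,
      box_w_homPoly c β hβ, box_w_pow β hβ]
    ring
  -- termwise bound
  have hterm : ∀ α ∈ box β, s * (wgt β α * g α)
      ≤ (if α = (fun _ => 0 : Fin n → ℕ) then 0
          else (pch β α + s * wgt β α) / 2 * D) := by
    intro α hα
    by_cases h0 : α = (fun _ => 0 : Fin n → ℕ)
    · rw [if_pos h0, h0]
      have hg0 : g (fun _ => 0) = 0 := by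
        rw [hgdef]
        have hc : (fun i : Fin n => (((fun _ => 0 : Fin n → ℕ) i : ℕ) : ℝ))
            = (fun _ => (0 : ℝ)) := by funext i; simp
        simp only [hc, homPoly_zero hd c]
        simp [zero_pow (show d ≠ 0 by omega)]
      rw [hg0, mul_zero, mul_zero]
    · rw [if_neg h0]
      -- basic facts about α
      have hαle : ∀ i, α i ≤ β i := by
        intro i
        have := Fintype.mem_piFinset.1 hα i
        exact Nat.lt_succ_iff.1 (Finset.mem_range.1 this)
      have hkd : (∑ i, α i) ≤ d := by
        rw [← hβ]; exact Finset.sum_le_sum fun i _ => hαle i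
      have hkpos : 0 < ∑ i, α i := by
        rcases Nat.eq_zero_or_pos (∑ i, α i) with h | h
        · exfalso
          apply h0
          funext i
          have := Finset.sum_eq_zero_iff.1 h i (Finset.mem_univ i)
          omega
        · exact h
      set k : ℕ := ∑ i, α i with hk
      have hkR : (∑ i, (α i : ℝ)) = (k : ℝ) := by rw [hk]; push_cast; ring
      have hkne : (k : ℝ) ≠ 0 := Nat.cast_ne_zero.2 (by omega)
      set x : Fin n → ℝ := fun i => (α i : ℝ) / (k : ℝ) with hx
      have hxmem : x ∈ stdSimplex ℝ (Fin n) := by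
        constructor
        · intro i
          exact div_nonneg (Nat.cast_nonneg _) (Nat.cast_nonneg _)
        · rw [hx]
          rw [← Finset.sum_div, hkR]
          field_simp
      have hfeq : homPoly n d c (fun i => (α i : ℝ)) = (k : ℝ) ^ d * homPoly n d c x := by
        rw [← homPoly_smul c (k : ℝ) x]
        congr 1
        funext i
        rw [hx]
        field_simp
      have hg_lb : 0 ≤ g α := by
        rw [hgdef]
        simp only
        rw [hfeq, hkR]
        have := hmf x hxmem
        nlinarith [pow_nonneg (Nat.cast_nonneg (α := ℝ) k) d]
      have hg_ub : g α ≤ D := by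
        rw [hgdef]
        simp only
        rw [hfeq, hkR, hD]
        have h1 := hfM x hxmem
        have h2 : ((k : ℝ)) ^ d ≤ ((d : ℝ)) ^ d := by
          apply pow_le_pow_left₀ (Nat.cast_nonneg _)
          exact_mod_cast hkd
        nlinarith [pow_nonneg (Nat.cast_nonneg (α := ℝ) k) d]
      have hpc := pch_nonneg β α
      have hsw : s * wgt β α = pch β α ∨ s * wgt β α = -pch β α := by
        rcases hs with h | h <;> rcases wgt_pm β α with h2 | h2 <;>
          rw [h, h2] <;> [left; right; right; left] <;> ring
      rcases hsw with h | h
      · rw [show s * (wgt β α * g α) = (s * wgt β α) * g α from by ring, h,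
          show (pch β α + pch β α) / 2 * D = pch β α * D from by ring]
        exact mul_le_mul_of_nonneg_left hg_ub hpc
      · rw [show s * (wgt β α * g α) = (s * wgt β α) * g α from by ring, h,
          show (pch β α + -pch β α) / 2 * D = 0 from by ring, neg_mul]
        exact neg_nonpos.2 (mul_nonneg hpc hg_lb)
  -- sum the bound
  have hsum := Finset.sum_le_sum hterm
  rw [← Finset.mul_sum, hid] at hsum
  have hrhs : (∑ α ∈ box β, (if α = (fun _ => 0 : Fin n → ℕ) then 0
      else (pch β α + s * wgt β α) / 2 * D))
      = (2 ^ d - 1 - s * (-1 : ℝ) ^ d) / 2 * D := by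
    rw [sum_ite_zero' (zero_mem_box β) (fun α => (pch β α + s * wgt β α) / 2 * D)]
    have hsplit : (∑ α ∈ box β, (pch β α + s * wgt β α) / 2 * D)
        = (∑ α ∈ box β, pch β α) * (D / 2) + (∑ α ∈ box β, wgt β α) * (s * D / 2) := by
      rw [Finset.sum_mul, Finset.sum_mul, ← Finset.sum_add_distrib]
      refine Finset.sum_congr rfl fun α _ => ?_
      ring
    rw [hsplit, box_pch β hβ, box_w β hβ hd, wgt_zero β hβ, pch_zero β]
    ring
  rw [hrhs] at hsum
  calc s * (c β * (∏ i, ((β i).factorial : ℝ)) - (d.factorial : ℝ) * m)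
      ≤ (2 ^ d - 1 - s * (-1 : ℝ) ^ d) / 2 * D := hsum
    _ = (d : ℝ) ^ d * (M - m) / 2 * (2 ^ d - 1 - s * (-1 : ℝ) ^ d) := by rw [hD]; ring


end St12

/-- for `f` homogeneous of degree `d ≥ 1`,
`max_β c_β β!/d! − min_β c_β β!/d! ≤ C(2d−1,d) d^d (f̄ − f̲)`. -/
theorem statement12 (n d : ℕ) (hn : 0 < n) (hd : 1 ≤ d) (c : (Fin n → ℕ) → ℝ) :
    sSup (bernsteinCoeffs n d c) - sInf (bernsteinCoeffs n d c) ≤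
      (Nat.choose (2 * d - 1) d : ℝ) * (d : ℝ) ^ d *
        (maxSimplex n (homPoly n d c) - minSimplex n (homPoly n d c)) := by
  classical
  set m := minSimplex n (homPoly n d c) with hm
  set M := maxSimplex n (homPoly n d c) with hM
  -- simplex facts
  have hcont : Continuous (homPoly n d c) := St12.homPoly_continuous c
  have hcomp : IsCompact (stdSimplex ℝ (Fin n)) := isCompact_stdSimplex _ _
  have hsne : (stdSimplex ℝ (Fin n)).Nonempty :=
    ⟨_, ite_eq_mem_stdSimplex ℝ (⟨0, hn⟩ : Fin n)⟩
  have hbddA : BddAbove (homPoly n d c '' stdSimplex ℝ (Fin n)) :=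
    (hcomp.image hcont).bddAbove
  have hbddB : BddBelow (homPoly n d c '' stdSimplex ℝ (Fin n)) :=
    (hcomp.image hcont).bddBelow
  have hfM : ∀ x ∈ stdSimplex ℝ (Fin n), homPoly n d c x ≤ M :=
    fun x hx => le_csSup hbddA ⟨x, hx, rfl⟩
  have hmf : ∀ x ∈ stdSimplex ℝ (Fin n), m ≤ homPoly n d c x :=
    fun x hx => csInf_le hbddB ⟨x, hx, rfl⟩
  obtain ⟨x0, hx0⟩ := hsne
  have hmM : m ≤ M := (hmf x0 hx0).trans (hfM x0 hx0)
  -- bernstein coefficients: a finite nonempty image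
  set T := Finset.Nat.antidiagonalTuple n d with hT
  set bf : (Fin n → ℕ) → ℝ :=
    fun β => c β * (∏ i, ((β i).factorial : ℝ)) / (d.factorial : ℝ) with hbf
  have hsetT : {β : Fin n → ℕ | ∑ i, β i = d} = ↑T := by
    ext β
    simp [hT, Finset.Nat.mem_antidiagonalTuple]
  have hBset : bernsteinCoeffs n d c = ↑(T.image bf) := by
    rw [bernsteinCoeffs, hsetT, Finset.coe_image]
  have hTne : T.Nonempty := by
    refine ⟨fun i => if i = (⟨0, hn⟩ : Fin n) then d else 0,
      Finset.Nat.mem_antidiagonalTuple.2 ?_⟩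
    simp
  have hIne : (T.image bf).Nonempty := hTne.image _
  obtain ⟨β1, hβ1T, hβ1⟩ : ∃ β1 ∈ T, sSup (bernsteinCoeffs n d c) = bf β1 := by
    rw [hBset, hIne.csSup_eq_max']
    obtain ⟨β1, hβ1T, hβ1⟩ := Finset.mem_image.1 (Finset.max'_mem (T.image bf) hIne)
    exact ⟨β1, hβ1T, hβ1.symm⟩
  obtain ⟨β2, hβ2T, hβ2⟩ : ∃ β2 ∈ T, sInf (bernsteinCoeffs n d c) = bf β2 := by
    rw [hBset, hIne.csInf_eq_min']
    obtain ⟨β2, hβ2T, hβ2⟩ := Finset.mem_image.1 (Finset.min'_mem (T.image bf) hIne)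
    exact ⟨β2, hβ2T, hβ2.symm⟩
  have hβ1d : ∑ i, β1 i = d := Finset.Nat.mem_antidiagonalTuple.1 hβ1T
  have hβ2d : ∑ i, β2 i = d := Finset.Nat.mem_antidiagonalTuple.1 hβ2T
  rw [hβ1, hβ2]
  -- core estimates
  have h1 := St12.core hd c hmf hfM hmM β1 hβ1d 1 (Or.inl rfl)
  have h2 := St12.core hd c hmf hfM hmM β2 hβ2d (-1) (Or.inr rfl)
  have hfacpos : (0 : ℝ) < (d.factorial : ℝ) := by
    exact_mod_cast Nat.factorial_pos d
  have hb1 : (d.factorial : ℝ) * bf β1 = c β1 * ∏ i, ((β1 i).factorial : ℝ) := by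
    rw [hbf]
    field_simp
  have hb2 : (d.factorial : ℝ) * bf β2 = c β2 * ∏ i, ((β2 i).factorial : ℝ) := by
    rw [hbf]
    field_simp
  have hDnn : (0 : ℝ) ≤ (d : ℝ) ^ d * (M - m) :=
    mul_nonneg (pow_nonneg (Nat.cast_nonneg d) d) (by linarith)
  have hkey : (d.factorial : ℝ) * (bf β1 - bf β2)
      ≤ ((2 : ℝ) ^ d - 1) * ((d : ℝ) ^ d * (M - m)) := by
    have e1 : (d.factorial : ℝ) * (bf β1 - bf β2)
        = (1 : ℝ) * (c β1 * (∏ i, ((β1 i).factorial : ℝ)) - (d.factorial : ℝ) * m)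
          + (-1 : ℝ) * (c β2 * (∏ i, ((β2 i).factorial : ℝ)) - (d.factorial : ℝ) * m) := by
      rw [mul_sub, hb1, hb2]
      ring
    rw [e1]
    have := add_le_add h1 h2
    calc (1 : ℝ) * (c β1 * (∏ i, ((β1 i).factorial : ℝ)) - (d.factorial : ℝ) * m)
          + (-1 : ℝ) * (c β2 * (∏ i, ((β2 i).factorial : ℝ)) - (d.factorial : ℝ) * m)
        ≤ (d : ℝ) ^ d * (M - m) / 2 * (2 ^ d - 1 - 1 * (-1 : ℝ) ^ d)
          + (d : ℝ) ^ d * (M - m) / 2 * (2 ^ d - 1 - (-1) * (-1 : ℝ) ^ d) := this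
      _ = ((2 : ℝ) ^ d - 1) * ((d : ℝ) ^ d * (M - m)) := by ring
  have h2p := St12.two_pow_le_real hd
  have hstep : ((2 : ℝ) ^ d - 1) * ((d : ℝ) ^ d * (M - m))
      ≤ (d.factorial : ℝ) * (((2 * d - 1).choose d : ℝ) * ((d : ℝ) ^ d * (M - m))) := by
    have := mul_le_mul_of_nonneg_right h2p hDnn
    calc ((2 : ℝ) ^ d - 1) * ((d : ℝ) ^ d * (M - m))
        ≤ (d.factorial : ℝ) * ((2 * d - 1).choose d : ℝ) * ((d : ℝ) ^ d * (M - m)) := this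
      _ = (d.factorial : ℝ) * (((2 * d - 1).choose d : ℝ) * ((d : ℝ) ^ d * (M - m))) := by ring
  have hfin : bf β1 - bf β2 ≤ ((2 * d - 1).choose d : ℝ) * ((d : ℝ) ^ d * (M - m)) := by
    have := hkey.trans hstep
    exact (mul_le_mul_iff_right₀ hfacpos).1 this
  calc bf β1 - bf β2 ≤ ((2 * d - 1).choose d : ℝ) * ((d : ℝ) ^ d * (M - m)) := hfin
    _ = ((2 * d - 1).choose d : ℝ) * (d : ℝ) ^ d * (M - m) := by ring
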